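/- For every α ∈ [0,2], c > 0, and x ∈ ℝ, the SIGTRON function satisfies the extended symmetric property s_{α,c}(x) = 1 − s_{2−α, 1/c}(−x). -/

import Mathlib

/-- `c_α = c^{1−α}/(α−1)` (real power). -/
noncomputable def cA (α c : ℝ) : ℝ := c ^ (1 - α) / (α - 1)

/-- SIGTRON: extended asymmetric sigmoid with Perceptron. -/
noncomputable def sigtron (α c : ℝ) (x : ℝ) : ℝ :=
  if α = 1 then 1 / (1 + Real.exp (-x))
  else if α < 1 then
    if x ≤ -(cA α c) then 1 / (1 + (1 + x / cA α c) ^ ((1 : ℝ) / (1 - α))) else 1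
  else
    if -(cA α c) < x then 1 / (1 + (1 + x / cA α c) ^ ((1 : ℝ) / (1 - α))) else 0

lemma cA_symm (α c : ℝ) (hc : 0 < c) : cA (2 - α) (1 / c) = -(cA α c) := by
  unfold cA
  rw [one_div, Real.inv_rpow hc.le, ← Real.rpow_neg hc.le,
    show -(1 - (2 - α)) = 1 - α by ring, show (2 - α - 1) = -(α - 1) by ring, div_neg]

lemma aux_frac (t : ℝ) (ht : 0 < t) : 1 / (1 + t) = 1 - 1 / (1 + t⁻¹) := by
  have h1 : (0:ℝ) < 1 + t := by linarith
  have h2 : (0:ℝ) < 1 + t⁻¹ := by positivity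
  field_simp
  ring

/-- For every `α ∈ [0,2]`, `c > 0` and `x ∈ ℝ`, SIGTRON satisfies
the extended symmetric property `s_{α,c}(x) = 1 − s_{2−α,1/c}(−x)`. -/
theorem sigtron_stmt5 (α c : ℝ) (hα : α ∈ Set.Icc (0 : ℝ) 2) (hc : 0 < c) (x : ℝ) :
    sigtron α c x = 1 - sigtron (2 - α) (1 / c) (-x) := by
  obtain ⟨h0, h2⟩ := hα
  by_cases h1 : α = 1
  · subst h1
    simp only [sigtron, show (2:ℝ) - 1 = 1 by norm_num, if_pos rfl, neg_neg, ↓reduceIte]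
    have h1 : (0:ℝ) < 1 + Real.exp (-x) := by positivity
    have h2 : (0:ℝ) < 1 + Real.exp x := by positivity
    rw [Real.exp_neg]
    field_simp
    ring
  have h1' : ¬ (2 - α = 1) := by intro h; apply h1; linarith
  rcases lt_or_gt_of_ne h1 with hlt | hgt
  · -- α < 1, so 2 - α > 1
    have h2' : ¬ (2 - α < 1) := by linarith
    set b := cA α c with hb
    have hbneg : b < 0 := by
      have : (0:ℝ) < c ^ (1 - α) := Real.rpow_pos_of_pos hc _
      have hd : α - 1 < 0 := by linarith
      exact div_neg_of_pos_of_neg this hd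
    simp only [sigtron, if_neg h1, if_pos hlt, if_neg h1', if_neg h2', cA_symm α c hc, ← hb,
      neg_neg, neg_div_neg_eq]
    by_cases hx : x ≤ -b
    · rw [if_pos hx]
      rcases eq_or_lt_of_le hx with heq | hxlt
      · -- x = -b
        rw [if_neg (show ¬ b < -x by rw [heq, neg_neg]; exact lt_irrefl b), heq]
        have hz : 1 + -b / b = 0 := by
          have hbne : b ≠ 0 := ne_of_lt hbneg
          field_simp
          norm_num
        rw [hz, Real.zero_rpow (by
          intro h; rw [div_eq_zero_iff] at h; rcases h with h | h <;> linarith)]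
        norm_num
      · rw [if_pos (show b < -x by linarith)]
        have hy : (0:ℝ) < 1 + x / b := by
          have : -1 < x / b := by rw [lt_div_iff_of_neg hbneg]; linarith
          linarith
        rw [show (1:ℝ) / (1 - (2 - α)) = -((1:ℝ) / (1 - α)) by
          rw [show (1 - (2 - α)) = -(1 - α) by ring, div_neg], Real.rpow_neg hy.le]
        exact aux_frac _ (Real.rpow_pos_of_pos hy _)
    · rw [if_neg hx, if_neg (by push_neg at hx ⊢; linarith)]
      norm_num
  · -- α > 1, so 2 - α < 1
    have h2' : ¬ (α < 1) := by linarith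
    have h2'' : 2 - α < 1 := by linarith
    set b := cA α c with hb
    have hbpos : 0 < b := by
      have : (0:ℝ) < c ^ (1 - α) := Real.rpow_pos_of_pos hc _
      have hd : 0 < α - 1 := by linarith
      exact div_pos this hd
    simp only [sigtron, if_neg h1, if_neg h2', if_neg h1', if_pos h2'', cA_symm α c hc, ← hb,
      neg_neg, neg_div_neg_eq]
    by_cases hx : -b < x
    · rw [if_pos hx, if_pos (show -x ≤ b by linarith)]
      have hy : (0:ℝ) < 1 + x / b := by
        have : -1 < x / b := by rw [lt_div_iff₀ hbpos]; linarith
        linarith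
      rw [show (1:ℝ) / (1 - α) = -((1:ℝ) / (1 - (2 - α))) by
        rw [show (1 - α) = -(1 - (2 - α)) by ring, div_neg], Real.rpow_neg hy.le]
      have := aux_frac _ (Real.rpow_pos_of_pos hy ((1:ℝ) / (1 - (2 - α))))
      linarith [this]
    · rw [if_neg hx]
      push_neg at hx
      rcases eq_or_lt_of_le hx with heq | hxlt
      · rw [if_pos (show -x ≤ b by rw [heq]; simp), heq]
        have hz : 1 + -b / b = 0 := by
          have hbne : b ≠ 0 := ne_of_gt hbpos
          field_simp
          norm_num
        rw [hz, Real.zero_rpow (by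
          intro h; rw [div_eq_zero_iff] at h; rcases h with h | h <;> linarith)]
        norm_num
      · rw [if_neg (show ¬ -x ≤ b by push_neg; linarith)]
        norm_num
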